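/- Let (A, B) be a biabduction instance of quantifier-free symbolic heaps. If there exists a solution seed Δ for (A,B), then the biabduction problem (A,B) has a solution: there exist quantifier-free symbolic heaps X and Y such that A*X is satisfiable and A*X ⊨ B*Y. -/

import Mathlib

/-! ## Array separation logic (ASL): syntax and stack-heap semantics -/

/-- Terms of array separation logic: variables (named by naturals), constants,
addition, and multiplication by a constant. -/
inductive Trm : Type where
  | var : ℕ → Trm
  | const : ℕ → Trm
  | add : Trm → Trm → Trm
  | smul : ℕ → Trm → Trm

/-- A stack maps variables to naturals. -/
abbrev Stack := ℕ → ℕ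

/-- Evaluation of terms under a stack. -/
def Trm.eval (s : Stack) : Trm → ℕ
  | .var x => s x
  | .const n => n
  | .add t u => t.eval s + u.eval s
  | .smul n t => n * t.eval s

/-- Variables occurring in a term. -/
def Trm.vars : Trm → Set ℕ
  | .var x => {x}
  | .const _ => ∅
  | .add t u => t.vars ∪ u.vars
  | .smul _ t => t.vars

/-- Pure formulas: conjunctions of atomic arithmetic constraints. -/
inductive PureF : Type where
  | tru : PureF
  | eq : Trm → Trm → PureF
  | ne : Trm → Trm → PureF
  | le : Trm → Trm → PureF
  | lt : Trm → Trm → PureF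
  | and : PureF → PureF → PureF

/-- Satisfaction of pure formulas (depends only on the stack). -/
def PureF.sat (s : Stack) : PureF → Prop
  | .tru => True
  | .eq t u => t.eval s = u.eval s
  | .ne t u => t.eval s ≠ u.eval s
  | .le t u => t.eval s ≤ u.eval s
  | .lt t u => t.eval s < u.eval s
  | .and p q => p.sat s ∧ q.sat s

def PureF.vars : PureF → Set ℕ
  | .tru => ∅
  | .eq t u => t.vars ∪ u.vars
  | .ne t u => t.vars ∪ u.vars
  | .le t u => t.vars ∪ u.vars
  | .lt t u => t.vars ∪ u.vars
  | .and p q => p.vars ∪ q.vars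

/-- The (top-level) terms occurring in a pure formula. -/
def PureF.trms : PureF → List Trm
  | .tru => []
  | .eq t u => [t, u]
  | .ne t u => [t, u]
  | .le t u => [t, u]
  | .lt t u => [t, u]
  | .and p q => p.trms ++ q.trms

/-- The conjuncts of a pure formula. -/
def PureF.conjuncts : PureF → List PureF
  | .and p q => p.conjuncts ++ q.conjuncts
  | p => [p]

/-- Finite conjunction. -/
def bigAnd : List PureF → PureF
  | [] => .tru
  | p :: ps => .and p (bigAnd ps)

/-- Spatial formulas: `emp`, points-to, arrays, and separating conjunction. -/
inductive Spatial : Type where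
  | emp : Spatial
  | pto : Trm → Trm → Spatial
  | arr : Trm → Trm → Spatial
  | star : Spatial → Spatial → Spatial

/-- Heaps: finite partial functions from ℕ (locations) to ℕ (values). -/
abbrev Heap := Finmap (fun _ : ℕ => ℕ)

/-- Satisfaction of spatial formulas. -/
def Spatial.sat (s : Stack) : Spatial → Heap → Prop
  | .emp, h => h = ∅
  | .pto t u, h =>
      h.keys = {Trm.eval s t} ∧ Finmap.lookup (Trm.eval s t) h = some (Trm.eval s u)
  | .arr t u, h =>
      Trm.eval s t ≤ Trm.eval s u ∧ h.keys = Finset.Icc (Trm.eval s t) (Trm.eval s u)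
  | .star F G, h =>
      ∃ h₁ h₂ : Heap, h₁.Disjoint h₂ ∧ h = h₁ ∪ h₂ ∧ F.sat s h₁ ∧ G.sat s h₂

def Spatial.vars : Spatial → Set ℕ
  | .emp => ∅
  | .pto t u => t.vars ∪ u.vars
  | .arr t u => t.vars ∪ u.vars
  | .star F G => F.vars ∪ G.vars

/-- The (top-level) terms occurring in a spatial formula. -/
def Spatial.trms : Spatial → List Trm
  | .emp => []
  | .pto t u => [t, u]
  | .arr t u => [t, u]
  | .star F G => F.trms ++ G.trms

/-- The points-to atoms of a spatial formula, as (address, value) pairs. -/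
def Spatial.ptos : Spatial → List (Trm × Trm)
  | .emp => []
  | .pto t u => [(t, u)]
  | .arr _ _ => []
  | .star F G => F.ptos ++ G.ptos

/-- The array atoms of a spatial formula, as endpoint pairs. -/
def Spatial.arrs : Spatial → List (Trm × Trm)
  | .emp => []
  | .pto _ _ => []
  | .arr t u => [(t, u)]
  | .star F G => F.arrs ++ G.arrs

/-- The arrays of the array abstraction `⟨A⟩`: each points-to `c ↦ d` is
replaced by the single-cell array `array(c,c)`. -/
def Spatial.absArrays : Spatial → List (Trm × Trm)
  | .emp => []
  | .pto t _ => [(t, t)]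
  | .arr t u => [(t, u)]
  | .star F G => F.absArrays ++ G.absArrays

/-- Finite separating conjunction. -/
def bigStar : List Spatial → Spatial
  | [] => .emp
  | F :: Fs => .star F (bigStar Fs)

/-- Quantifier-free symbolic heaps `Π : F`. -/
structure SymHeap : Type where
  pure : PureF
  spatial : Spatial

/-- Satisfaction of quantifier-free symbolic heaps. -/
def SymHeap.sat (s : Stack) (h : Heap) (A : SymHeap) : Prop :=
  A.pure.sat s ∧ A.spatial.sat s h

def SymHeap.vars (A : SymHeap) : Set ℕ := A.pure.vars ∪ A.spatial.vars

/-- All (top-level) terms occurring in a symbolic heap. -/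
def SymHeap.trms (A : SymHeap) : List Trm := A.pure.trms ++ A.spatial.trms

/-- Lifting `*` to symbolic heaps: conjoin pure parts, `*`-conjoin spatial parts. -/
def SymHeap.star (A X : SymHeap) : SymHeap :=
  ⟨.and A.pure X.pure, .star A.spatial X.spatial⟩

/-- Satisfiability of a symbolic heap. -/
def SymHeap.Satisfiable (A : SymHeap) : Prop := ∃ (s : Stack) (h : Heap), A.sat s h

/-- Semantic entailment between quantifier-free symbolic heaps. -/
def Entails (A B : SymHeap) : Prop := ∀ (s : Stack) (h : Heap), A.sat s h → B.sat s h

/-- Existentially quantified symbolic heaps `∃ z⃗. Π : F`. -/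
structure QSymHeap : Type where
  bound : List ℕ
  body : SymHeap

/-- Satisfaction of quantified symbolic heaps: some extension of the stack on the
bound variables satisfies the body. -/
def QSymHeap.sat (s : Stack) (h : Heap) (B : QSymHeap) : Prop :=
  ∃ s' : Stack, (∀ x : ℕ, x ∉ B.bound → s' x = s x) ∧ B.body.sat s' h

/-! ## The arithmetic encodings γ, β, φ, ψ₁, ψ₂, χ (interpreted over stacks) -/

/-- `s ⊨ γ(A)`: the Presburger satisfiability encoding of `A`, i.e. the pure part
of `A` together with well-definedness and pairwise disjointness of the arrays of
the array abstraction `⟨A⟩`. -/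
def gammaSat (A : SymHeap) (s : Stack) : Prop :=
  A.pure.sat s ∧
  (∀ p ∈ A.spatial.absArrays, Trm.eval s p.1 ≤ Trm.eval s p.2) ∧
  A.spatial.absArrays.Pairwise (fun p q =>
    Trm.eval s p.2 < Trm.eval s q.1 ∨ Trm.eval s q.2 < Trm.eval s p.1)

/-- `s ⊨ β(A,B)`. -/
def betaSat (A B : SymHeap) (s : Stack) : Prop :=
  gammaSat A s ∧ gammaSat B s ∧
  (∀ p ∈ B.spatial.ptos, ∀ q ∈ A.spatial.arrs,
      Trm.eval s p.1 < Trm.eval s q.1 ∨ Trm.eval s p.1 > Trm.eval s q.2) ∧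
  (∀ p ∈ A.spatial.ptos, ∀ q ∈ B.spatial.ptos,
      Trm.eval s p.1 ≠ Trm.eval s q.1 ∨ Trm.eval s p.2 = Trm.eval s q.2)

/-- The term set `Terms(A,B)`: all terms occurring in `A` and `B`, together with
the successor terms `b_i + 1`, `d_i + 1` (array right endpoints) and
`t_i + 1`, `v_i + 1` (points-to addresses). -/
def termSet (A B : SymHeap) : List Trm :=
  A.trms ++ B.trms ++
  (A.spatial.arrs.map fun p => Trm.add p.2 (Trm.const 1)) ++
  (B.spatial.arrs.map fun p => Trm.add p.2 (Trm.const 1)) ++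
  (A.spatial.ptos.map fun p => Trm.add p.1 (Trm.const 1)) ++
  (B.spatial.ptos.map fun p => Trm.add p.1 (Trm.const 1))

/-- A solution seed for the biabduction instance `(A,B)`. -/
def IsSolutionSeed (A B : SymHeap) (Δ : PureF) : Prop :=
  (∃ s : Stack, Δ.sat s) ∧
  (∀ s : Stack, Δ.sat s → betaSat A B s) ∧
  (∀ δ ∈ Δ.conjuncts, ∃ t ∈ termSet A B, ∃ u ∈ termSet A B,
      δ = PureF.lt t u ∨ δ = PureF.eq t u) ∧
  (∀ t ∈ termSet A B, ∀ u ∈ termSet A B, ∃ δ ∈ Δ.conjuncts,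
      δ = PureF.lt t u ∨ δ = PureF.lt u t ∨ δ = PureF.eq t u)

/-- The (quantifier-free) biabduction problem `(A,B)` has a solution. -/
def HasBiabductionSolution (A B : SymHeap) : Prop :=
  ∃ X Y : SymHeap, (A.star X).Satisfiable ∧ Entails (A.star X) (B.star Y)

/-- `s ⊨ φ(A,B)` (over the array abstractions of `A` and `B`). -/
def phiSat (A B : SymHeap) (s : Stack) : Prop :=
  ∃ x : ℕ,
    (∃ p ∈ A.spatial.absArrays, Trm.eval s p.1 ≤ x ∧ x ≤ Trm.eval s p.2) ∧
    ∀ q ∈ B.spatial.absArrays, x < Trm.eval s q.1 ∨ x > Trm.eval s q.2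

/-- `s ⊨ ψ₁(A,B)`: some points-to address of `B` is covered by an array of `A`. -/
def psi1Sat (A B : SymHeap) (s : Stack) : Prop :=
  ∃ p ∈ A.spatial.arrs, ∃ q ∈ B.spatial.ptos,
    Trm.eval s p.1 ≤ Trm.eval s q.1 ∧ Trm.eval s q.1 ≤ Trm.eval s p.2

/-- `s ⊨ ψ₂(A,B)`: some pointers of `A` and `B` share an address but disagree on
their contents. -/
def psi2Sat (A B : SymHeap) (s : Stack) : Prop :=
  ∃ p ∈ A.spatial.ptos, ∃ q ∈ B.spatial.ptos,
    Trm.eval s p.1 = Trm.eval s q.1 ∧ Trm.eval s p.2 ≠ Trm.eval s q.2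

/-- `s ⊨ χ(A, ∃z⃗.Q)`. -/
def chiSat (A : SymHeap) (zs : List ℕ) (Q : SymHeap) (s : Stack) : Prop :=
  gammaSat A s ∧
  ∀ s' : Stack, (∀ x : ℕ, x ∉ zs → s' x = s x) →
    (¬ gammaSat Q s' ∨ phiSat A Q s' ∨ phiSat Q A s' ∨
      psi1Sat A Q s' ∨ psi2Sat A Q s')

section Helpers

/-- Build a heap from a list of keys and a content function. -/
def mkHeap (g : ℕ → ℕ) : List ℕ → Heap
  | [] => ∅
  | n :: l => (mkHeap g l).insert n (g n)

lemma mem_mkHeap (g : ℕ → ℕ) (l : List ℕ) (n : ℕ) : n ∈ mkHeap g l ↔ n ∈ l := by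
  induction l with
  | nil => simp [mkHeap, Finmap.notMem_empty]
  | cons m l ih => simp [mkHeap, Finmap.mem_insert, ih]

lemma keys_mkHeap (g : ℕ → ℕ) (l : List ℕ) : (mkHeap g l).keys = l.toFinset := by
  ext n; simp [Finmap.mem_keys, mem_mkHeap]

lemma lookup_mkHeap (g : ℕ → ℕ) {l : List ℕ} {n : ℕ} (h : n ∈ l) :
    (mkHeap g l).lookup n = some (g n) := by
  induction l with
  | nil => simp at h
  | cons m l ih =>
    by_cases hnm : n = m
    · subst hnm; simp [mkHeap, Finmap.lookup_insert]
    · rcases List.mem_cons.mp h with h' | h'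
      · exact absurd h' hnm
      · rw [mkHeap, Finmap.lookup_insert_of_ne _ hnm, ih h']

lemma mem_foldr_union {α : Type*} (f : α → Finset ℕ) (l : List α) (n : ℕ) :
    n ∈ (l.map f).foldr (· ∪ ·) ∅ ↔ ∃ a ∈ l, n ∈ f a := by
  induction l with
  | nil => simp
  | cons a l ih => simp [ih]

/-- The footprint of a spatial formula under a stack. -/
def footprint (F : Spatial) (s : Stack) : Finset ℕ :=
  (F.absArrays.map fun p => Finset.Icc (p.1.eval s) (p.2.eval s)).foldr (· ∪ ·) ∅

lemma mem_footprint {F : Spatial} {s : Stack} {n : ℕ} :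
    n ∈ footprint F s ↔ ∃ p ∈ F.absArrays, n ∈ Finset.Icc (p.1.eval s) (p.2.eval s) :=
  mem_foldr_union _ _ _

lemma footprint_star {F G : Spatial} {s : Stack} :
    footprint (.star F G) s = footprint F s ∪ footprint G s := by
  ext n
  simp only [mem_footprint, Finset.mem_union, Spatial.absArrays, List.mem_append]
  constructor
  · rintro ⟨p, (hp | hp), h⟩
    · exact Or.inl ⟨p, hp, h⟩
    · exact Or.inr ⟨p, hp, h⟩
  · rintro (⟨p, hp, h⟩ | ⟨p, hp, h⟩)
    · exact ⟨p, Or.inl hp, h⟩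
    · exact ⟨p, Or.inr hp, h⟩

lemma absArrays_trms {F : Spatial} {p : Trm × Trm} (h : p ∈ F.absArrays) :
    p.1 ∈ F.trms ∧ p.2 ∈ F.trms := by
  induction F with
  | emp => simp [Spatial.absArrays] at h
  | pto t u => simp [Spatial.absArrays] at h; subst h; simp [Spatial.trms]
  | arr t u => simp [Spatial.absArrays] at h; subst h; simp [Spatial.trms]
  | star F G ihF ihG =>
    simp only [Spatial.absArrays, List.mem_append] at h
    simp only [Spatial.trms, List.mem_append]
    rcases h with h | h
    · exact ⟨Or.inl (ihF h).1, Or.inl (ihF h).2⟩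
    · exact ⟨Or.inr (ihG h).1, Or.inr (ihG h).2⟩

lemma ptos_trms {F : Spatial} {p : Trm × Trm} (h : p ∈ F.ptos) :
    p.1 ∈ F.trms ∧ p.2 ∈ F.trms := by
  induction F with
  | emp => simp [Spatial.ptos] at h
  | pto t u => simp [Spatial.ptos] at h; subst h; simp [Spatial.trms]
  | arr t u => simp [Spatial.ptos] at h
  | star F G ihF ihG =>
    simp only [Spatial.ptos, List.mem_append] at h
    simp only [Spatial.trms, List.mem_append]
    rcases h with h | h
    · exact ⟨Or.inl (ihF h).1, Or.inl (ihF h).2⟩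
    · exact ⟨Or.inr (ihG h).1, Or.inr (ihG h).2⟩

lemma arrs_trms {F : Spatial} {p : Trm × Trm} (h : p ∈ F.arrs) :
    p.1 ∈ F.trms ∧ p.2 ∈ F.trms := by
  induction F with
  | emp => simp [Spatial.arrs] at h
  | pto t u => simp [Spatial.arrs] at h
  | arr t u => simp [Spatial.arrs] at h; subst h; simp [Spatial.trms]
  | star F G ihF ihG =>
    simp only [Spatial.arrs, List.mem_append] at h
    simp only [Spatial.trms, List.mem_append]
    rcases h with h | h
    · exact ⟨Or.inl (ihF h).1, Or.inl (ihF h).2⟩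
    · exact ⟨Or.inr (ihG h).1, Or.inr (ihG h).2⟩

lemma absArrays_cases {F : Spatial} {p : Trm × Trm} (h : p ∈ F.absArrays) :
    p ∈ F.arrs ∨ (p.2 = p.1 ∧ ∃ u, (p.1, u) ∈ F.ptos) := by
  induction F with
  | emp => simp [Spatial.absArrays] at h
  | pto t u => simp [Spatial.absArrays] at h; subst h; exact Or.inr ⟨rfl, u, by simp [Spatial.ptos]⟩
  | arr t u => simp [Spatial.absArrays] at h; subst h; simp [Spatial.arrs]
  | star F G ihF ihG =>
    simp only [Spatial.absArrays, List.mem_append] at h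
    rcases h with h | h
    · rcases ihF h with h' | ⟨he, u, hu⟩
      · exact Or.inl (by simp [Spatial.arrs, h'])
      · exact Or.inr ⟨he, u, by simp [Spatial.ptos, hu]⟩
    · rcases ihG h with h' | ⟨he, u, hu⟩
      · exact Or.inl (by simp [Spatial.arrs, h'])
      · exact Or.inr ⟨he, u, by simp [Spatial.ptos, hu]⟩

lemma ptos_sublist_absArrays (F : Spatial) :
    (F.ptos.map fun p => (p.1, p.1)).Sublist F.absArrays := by
  induction F with
  | emp => simp [Spatial.ptos, Spatial.absArrays]
  | pto t u => simp [Spatial.ptos, Spatial.absArrays]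
  | arr t u => simp [Spatial.ptos, Spatial.absArrays]
  | star F G ihF ihG =>
    simp only [Spatial.ptos, Spatial.absArrays, List.map_append]
    exact ihF.append ihG

lemma footprint_congr {F : Spatial} {s s' : Stack}
    (h : ∀ t ∈ F.trms, Trm.eval s' t = Trm.eval s t) :
    footprint F s' = footprint F s := by
  ext n
  simp only [mem_footprint]
  constructor <;> rintro ⟨p, hp, hn⟩ <;> refine ⟨p, hp, ?_⟩
  · rwa [h _ (absArrays_trms hp).1, h _ (absArrays_trms hp).2] at hn
  · rwa [h _ (absArrays_trms hp).1, h _ (absArrays_trms hp).2]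

lemma pure_sat_congr {p : PureF} {s s' : Stack}
    (h : ∀ t ∈ p.trms, Trm.eval s' t = Trm.eval s t) : p.sat s' ↔ p.sat s := by
  induction p with
  | tru => simp [PureF.sat]
  | eq t u => simp [PureF.sat, h t (by simp [PureF.trms]), h u (by simp [PureF.trms])]
  | ne t u => simp [PureF.sat, h t (by simp [PureF.trms]), h u (by simp [PureF.trms])]
  | le t u => simp [PureF.sat, h t (by simp [PureF.trms]), h u (by simp [PureF.trms])]
  | lt t u => simp [PureF.sat, h t (by simp [PureF.trms]), h u (by simp [PureF.trms])]
  | and p q ihp ihq =>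
    simp only [PureF.sat]
    rw [ihp fun t ht => h t (by simp [PureF.trms, ht]),
        ihq fun t ht => h t (by simp [PureF.trms, ht])]

lemma bigAnd_sat {l : List PureF} {s : Stack} : (bigAnd l).sat s ↔ ∀ p ∈ l, p.sat s := by
  induction l with
  | nil => simp [bigAnd, PureF.sat]
  | cons p l ih => simp [bigAnd, PureF.sat, ih]

/-- Soundness: a heap satisfying `F` has keys exactly the footprint and the
prescribed contents at points-to addresses. -/
lemma sat_sound {F : Spatial} {s : Stack} {h : Heap} (hs : F.sat s h) :
    h.keys = footprint F s ∧
      ∀ p ∈ F.ptos, h.lookup (p.1.eval s) = some (p.2.eval s) := by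
  induction F generalizing h with
  | emp =>
    subst hs
    refine ⟨?_, by simp [Spatial.ptos]⟩
    simp [footprint, Spatial.absArrays, Finmap.keys_empty]
  | pto t u =>
    obtain ⟨hk, hl⟩ := hs
    constructor
    · rw [hk]; ext n; simp [footprint, Spatial.absArrays]
    · intro p hp; simp only [Spatial.ptos, List.mem_singleton] at hp; subst hp; exact hl
  | arr t u =>
    obtain ⟨hle, hk⟩ := hs
    refine ⟨?_, by simp [Spatial.ptos]⟩
    rw [hk]; ext n; simp [footprint, Spatial.absArrays]
  | star F G ihF ihG =>
    obtain ⟨h₁, h₂, hdis, rfl, hF, hG⟩ := hs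
    obtain ⟨hk₁, hl₁⟩ := ihF hF
    obtain ⟨hk₂, hl₂⟩ := ihG hG
    constructor
    · rw [Finmap.keys_union, hk₁, hk₂, footprint_star]
    · intro p hp
      simp only [Spatial.ptos, List.mem_append] at hp
      rcases hp with hp | hp
      · have hm : p.1.eval s ∈ h₁ := by
          rw [← Finmap.mem_keys, hk₁, mem_footprint]
          exact ⟨(p.1, p.1), (ptos_sublist_absArrays F).mem (List.mem_map_of_mem (f := fun q : Trm × Trm => (q.1, q.1)) hp),
            by simp⟩
        rw [Finmap.lookup_union_left hm]; exact hl₁ p hp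
      · have hm : p.1.eval s ∈ h₂ := by
          rw [← Finmap.mem_keys, hk₂, mem_footprint]
          exact ⟨(p.1, p.1), (ptos_sublist_absArrays G).mem (List.mem_map_of_mem (f := fun q : Trm × Trm => (q.1, q.1)) hp),
            by simp⟩
        have hm' : p.1.eval s ∉ h₁ := fun hc => hdis _ hc hm
        rw [Finmap.lookup_union_right hm']; exact hl₂ p hp

/-- Construction: given well-definedness and pairwise disjointness of the
abstract arrays, and a content function compatible with the points-tos, there
is a heap satisfying `F` with the footprint as domain and `g` as contents. -/
lemma sat_construct (F : Spatial) (s : Stack) (g : ℕ → ℕ)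
    (hwf : ∀ p ∈ F.absArrays, p.1.eval s ≤ p.2.eval s)
    (hdisj : F.absArrays.Pairwise fun p q =>
      p.2.eval s < q.1.eval s ∨ q.2.eval s < p.1.eval s)
    (hg : ∀ p ∈ F.ptos, g (p.1.eval s) = p.2.eval s) :
    ∃ h : Heap, F.sat s h ∧ h.keys = footprint F s ∧
      ∀ n ∈ footprint F s, h.lookup n = some (g n) := by
  induction F with
  | emp =>
    refine ⟨∅, rfl, ?_, ?_⟩ <;> simp [footprint, Spatial.absArrays, Finmap.keys_empty]
  | pto t u =>
    have hfp : footprint (.pto t u) s = {t.eval s} := by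
      ext n; simp [footprint, Spatial.absArrays]
    refine ⟨Finmap.singleton (t.eval s) (g (t.eval s)), ⟨?_, ?_⟩, ?_, ?_⟩
    · simp [Finmap.keys_singleton]
    · rw [Finmap.lookup_singleton_eq, hg (t, u) (by simp [Spatial.ptos])]
    · rw [Finmap.keys_singleton, hfp]
    · intro n hn
      rw [hfp] at hn
      simp only [Finset.mem_singleton] at hn
      subst hn
      exact Finmap.lookup_singleton_eq
  | arr t u =>
    have hle : t.eval s ≤ u.eval s := hwf (t, u) (by simp [Spatial.absArrays])
    have hfp : footprint (.arr t u) s = Finset.Icc (t.eval s) (u.eval s) := by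
      ext n; simp [footprint, Spatial.absArrays]
    refine ⟨mkHeap g (Finset.Icc (t.eval s) (u.eval s)).toList, ⟨hle, ?_⟩, ?_, ?_⟩
    · rw [keys_mkHeap, Finset.toList_toFinset]
    · rw [keys_mkHeap, Finset.toList_toFinset, hfp]
    · intro n hn
      rw [hfp] at hn
      exact lookup_mkHeap g (by rwa [Finset.mem_toList])
  | star F G ihF ihG =>
    simp only [Spatial.absArrays, List.pairwise_append] at hdisj
    obtain ⟨hdF, hdG, hcross⟩ := hdisj
    have hwfF : ∀ p ∈ F.absArrays, p.1.eval s ≤ p.2.eval s := fun p hp =>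
      hwf p (by simp [Spatial.absArrays, hp])
    have hwfG : ∀ p ∈ G.absArrays, p.1.eval s ≤ p.2.eval s := fun p hp =>
      hwf p (by simp [Spatial.absArrays, hp])
    obtain ⟨h₁, hs₁, hk₁, hl₁⟩ := ihF hwfF hdF
      (fun p hp => hg p (by simp [Spatial.ptos, hp]))
    obtain ⟨h₂, hs₂, hk₂, hl₂⟩ := ihG hwfG hdG
      (fun p hp => hg p (by simp [Spatial.ptos, hp]))
    have hdis : h₁.Disjoint h₂ := by
      intro x hx₁ hx₂
      rw [← Finmap.mem_keys, hk₁, mem_footprint] at hx₁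
      rw [← Finmap.mem_keys, hk₂, mem_footprint] at hx₂
      obtain ⟨p, hp, hxp⟩ := hx₁
      obtain ⟨q, hq, hxq⟩ := hx₂
      rcases hcross p hp q hq with hlt | hlt <;>
        (rw [Finset.mem_Icc] at hxp hxq; omega)
    refine ⟨h₁ ∪ h₂, ⟨h₁, h₂, hdis, rfl, hs₁, hs₂⟩, ?_, ?_⟩
    · rw [Finmap.keys_union, hk₁, hk₂, footprint_star]
    · intro n hn
      rw [footprint_star, Finset.mem_union] at hn
      by_cases hnf : n ∈ footprint F s
      · have hm : n ∈ h₁ := by rw [← Finmap.mem_keys, hk₁]; exact hnf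
        rw [Finmap.lookup_union_left hm]; exact hl₁ n hnf
      · have hng : n ∈ footprint G s := hn.resolve_left hnf
        have hm : n ∉ h₁ := by rw [← Finmap.mem_keys, hk₁]; exact hnf
        rw [Finmap.lookup_union_right hm]; exact hl₂ n hng

lemma absArrays_bigStar_pto (g : ℕ → ℕ) (l : List ℕ) :
    (bigStar (l.map fun n => Spatial.pto (.const n) (.const (g n)))).absArrays =
      l.map fun n => (Trm.const n, Trm.const n) := by
  induction l with
  | nil => simp [bigStar, Spatial.absArrays]
  | cons m l ih => simp [bigStar, Spatial.absArrays, ih]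

lemma ptos_bigStar_pto (g : ℕ → ℕ) (l : List ℕ) :
    (bigStar (l.map fun n => Spatial.pto (.const n) (.const (g n)))).ptos =
      l.map fun n => (Trm.const n, Trm.const (g n)) := by
  induction l with
  | nil => simp [bigStar, Spatial.ptos]
  | cons m l ih => simp [bigStar, Spatial.ptos, ih]

lemma absArrays_bigStar_arr (l : List ℕ) :
    (bigStar (l.map fun n => Spatial.arr (.const n) (.const n))).absArrays =
      l.map fun n => (Trm.const n, Trm.const n) := by
  induction l with
  | nil => simp [bigStar, Spatial.absArrays]
  | cons m l ih => simp [bigStar, Spatial.absArrays, ih]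

lemma ptos_bigStar_arr (l : List ℕ) :
    (bigStar (l.map fun n => Spatial.arr (.const n) (.const n))).ptos = [] := by
  induction l with
  | nil => simp [bigStar, Spatial.ptos]
  | cons m l ih => simp [bigStar, Spatial.ptos, ih]

end Helpers

lemma footprint_singletons (s : Stack) {F : Spatial} {l : List ℕ}
    (h : F.absArrays = l.map fun n => (Trm.const n, Trm.const n)) :
    footprint F s = l.toFinset := by
  ext n
  rw [mem_footprint, h]
  simp only [List.mem_map, List.mem_toFinset, Finset.mem_Icc]
  constructor
  · rintro ⟨p, ⟨a, ha, rfl⟩, h1, h2⟩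
    simp only [Trm.eval] at h1 h2
    have hna : n = a := le_antisymm h2 h1
    rwa [hna]
  · intro hn
    exact ⟨(Trm.const n, Trm.const n), ⟨n, hn, rfl⟩, le_refl _, le_refl _⟩

lemma pairwise_singletons (s : Stack) {l : List ℕ} (hl : l.Nodup) :
    (l.map fun n => ((Trm.const n : Trm), (Trm.const n : Trm))).Pairwise
      (fun p q => p.2.eval s < q.1.eval s ∨ q.2.eval s < p.1.eval s) := by
  rw [List.pairwise_map]
  exact hl.imp fun hab => by simp only [Trm.eval]; omega

/-- The content function determined by a stack and the points-tos of `A` and `B`. -/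
def gfun (s : Stack) (lA lB : List (Trm × Trm)) : ℕ → ℕ := fun n =>
  match lA.find? (fun p => p.1.eval s == n) with
  | some p => p.2.eval s
  | none =>
    match lB.find? (fun p => p.1.eval s == n) with
    | some p => p.2.eval s
    | none => 0

lemma addr_uniq {s : Stack} {l : List (Trm × Trm)}
    (hl : l.Pairwise fun p q => p.1.eval s ≠ q.1.eval s)
    {p q : Trm × Trm} (hp : p ∈ l) (hq : q ∈ l) (he : p.1.eval s = q.1.eval s) :
    p.2.eval s = q.2.eval s := by
  by_cases hpq : p = q
  · rw [hpq]
  · haveI : Std.Symm (fun p q : Trm × Trm => p.1.eval s ≠ q.1.eval s) := ⟨fun _ _ h => Ne.symm h⟩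
    exact absurd he (hl.forall hp hq hpq)

lemma gfun_eq_of_memA {s : Stack} {lA lB : List (Trm × Trm)}
    (hA : lA.Pairwise fun p q => p.1.eval s ≠ q.1.eval s)
    {p : Trm × Trm} (hp : p ∈ lA) : gfun s lA lB (p.1.eval s) = p.2.eval s := by
  unfold gfun
  cases hf : lA.find? (fun q => q.1.eval s == p.1.eval s) with
  | none =>
    have hc := List.find?_eq_none.mp hf p hp
    simp at hc
  | some q =>
    have hq := List.mem_of_find?_eq_some hf
    have he : q.1.eval s = p.1.eval s := by simpa using List.find?_some hf
    exact addr_uniq hA hq hp he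

lemma gfun_eq_of_memB {s : Stack} {lA lB : List (Trm × Trm)}
    (hB : lB.Pairwise fun p q => p.1.eval s ≠ q.1.eval s)
    (hAB : ∀ q ∈ lA, ∀ p ∈ lB, q.1.eval s ≠ p.1.eval s ∨ q.2.eval s = p.2.eval s)
    {p : Trm × Trm} (hp : p ∈ lB) : gfun s lA lB (p.1.eval s) = p.2.eval s := by
  unfold gfun
  cases hfA : lA.find? (fun q => q.1.eval s == p.1.eval s) with
  | some q =>
    have hq := List.mem_of_find?_eq_some hfA
    have he : q.1.eval s = p.1.eval s := by simpa using List.find?_some hfA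
    exact (hAB q hq p hp).resolve_left (fun hc => hc he)
  | none =>
    cases hfB : lB.find? (fun q => q.1.eval s == p.1.eval s) with
    | none =>
      have hc := List.find?_eq_none.mp hfB p hp
      simp at hc
    | some q =>
      have hq := List.mem_of_find?_eq_some hfB
      have he : q.1.eval s = p.1.eval s := by simpa using List.find?_some hfB
      exact addr_uniq hB hq hp he

/-- Theorem (seed ⟹ solution): for a biabduction instance `(A,B)` (with `A`, `B`
satisfiable), if there exists a solution seed `Δ` for `(A,B)` then the
biabduction problem `(A,B)` has a solution: there exist quantifier-free
`X`, `Y` with `A*X` satisfiable and `A*X ⊨ B*Y`. -/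
theorem stmt_9 (A B : SymHeap) (hA : A.Satisfiable) (hB : B.Satisfiable)
    (hseed : ∃ Δ : PureF, IsSolutionSeed A B Δ) :
    ∃ X Y : SymHeap, (A.star X).Satisfiable ∧ Entails (A.star X) (B.star Y) := by
  classical
  obtain ⟨Δ, ⟨s, hΔs⟩, hβall, -, -⟩ := hseed
  obtain ⟨⟨hpA, hwfA, hdA⟩, ⟨hpB, hwfB, hdB⟩, hβ1, hβ2⟩ := hβall s hΔs
  -- pairwise distinct points-to addresses in A and in B
  have hptoA : A.spatial.ptos.Pairwise fun p q => p.1.eval s ≠ q.1.eval s := by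
    have h := hdA.sublist (ptos_sublist_absArrays A.spatial)
    rw [List.pairwise_map] at h
    exact h.imp fun hab => by dsimp only at hab; omega
  have hptoB : B.spatial.ptos.Pairwise fun p q => p.1.eval s ≠ q.1.eval s := by
    have h := hdB.sublist (ptos_sublist_absArrays B.spatial)
    rw [List.pairwise_map] at h
    exact h.imp fun hab => by dsimp only at hab; omega
  set g := gfun s A.spatial.ptos B.spatial.ptos with hgdef
  have hgA : ∀ p ∈ A.spatial.ptos, g (p.1.eval s) = p.2.eval s :=
    fun p hp => gfun_eq_of_memA hptoA hp
  have hgB : ∀ p ∈ B.spatial.ptos, g (p.1.eval s) = p.2.eval s :=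
    fun p hp => gfun_eq_of_memB hptoB hβ2 hp
  set SA := footprint A.spatial s with hSAdef
  set SB := footprint B.spatial s with hSBdef
  set FX : Spatial :=
    bigStar (((SB \ SA).toList).map fun n => Spatial.pto (.const n) (.const (g n))) with hFX
  set FY : Spatial :=
    bigStar (((SA \ SB).toList).map fun n => Spatial.arr (.const n) (.const n)) with hFY
  set Pin := bigAnd ((A.trms ++ B.trms).map fun t => PureF.eq t (Trm.const (t.eval s)))
    with hPin
  refine ⟨⟨Pin, FX⟩, ⟨.tru, FY⟩, ?_, ?_⟩
  -- facts about FX, FY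
  all_goals
    have hfpX : ∀ s'' : Stack, footprint FX s'' = SB \ SA := by
      intro s''
      rw [hFX, footprint_singletons s'' (absArrays_bigStar_pto g _),
        Finset.toList_toFinset]
    have hfpY : ∀ s'' : Stack, footprint FY s'' = SA \ SB := by
      intro s''
      rw [hFY, footprint_singletons s'' (absArrays_bigStar_arr _),
        Finset.toList_toFinset]
  · -- Satisfiability of A * X at (s, h₁ ∪ h₂)
    obtain ⟨h₁, hs₁, hk₁, _⟩ := sat_construct A.spatial s g hwfA hdA hgA
    have hwfX : ∀ p ∈ FX.absArrays, p.1.eval s ≤ p.2.eval s := by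
      intro p hp
      rw [hFX, absArrays_bigStar_pto] at hp
      obtain ⟨n, _, rfl⟩ := List.mem_map.mp hp
      exact le_refl _
    have hdX : FX.absArrays.Pairwise
        (fun p q => p.2.eval s < q.1.eval s ∨ q.2.eval s < p.1.eval s) := by
      rw [hFX, absArrays_bigStar_pto]
      exact pairwise_singletons s (Finset.nodup_toList _)
    have hgX : ∀ p ∈ FX.ptos, g (p.1.eval s) = p.2.eval s := by
      intro p hp
      rw [hFX, ptos_bigStar_pto] at hp
      obtain ⟨n, _, rfl⟩ := List.mem_map.mp hp
      rfl
    obtain ⟨h₂, hs₂, hk₂, _⟩ := sat_construct FX s g hwfX hdX hgX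
    have hdis : h₁.Disjoint h₂ := by
      intro x hx1 hx2
      rw [← Finmap.mem_keys, hk₁] at hx1
      rw [← Finmap.mem_keys, hk₂, hfpX s] at hx2
      exact (Finset.mem_sdiff.mp hx2).2 hx1
    have hPinSat : Pin.sat s := by
      rw [hPin, bigAnd_sat]
      intro p hp
      obtain ⟨t, _, rfl⟩ := List.mem_map.mp hp
      simp [PureF.sat, Trm.eval]
    exact ⟨s, h₁ ∪ h₂, ⟨hpA, hPinSat⟩, h₁, h₂, hdis, rfl, hs₁, hs₂⟩
  · -- Entailment
    intro s' h' hsat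
    obtain ⟨⟨hpA', hPin'⟩, h₁, h₂, hdis, rfl, hsA', hsX'⟩ := hsat
    have heq : ∀ t ∈ A.trms ++ B.trms, t.eval s' = t.eval s := by
      intro t ht
      have h := (bigAnd_sat.mp hPin') (PureF.eq t (.const (t.eval s)))
        (List.mem_map_of_mem ht)
      simpa [PureF.sat, Trm.eval] using h
    have heqA : ∀ t ∈ A.trms, t.eval s' = t.eval s := fun t ht =>
      heq t (List.mem_append_left _ ht)
    have heqB : ∀ t ∈ B.trms, t.eval s' = t.eval s := fun t ht =>
      heq t (List.mem_append_right _ ht)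
    have heqAs : ∀ t ∈ A.spatial.trms, t.eval s' = t.eval s := fun t ht =>
      heqA t (List.mem_append_right _ ht)
    have heqBs : ∀ t ∈ B.spatial.trms, t.eval s' = t.eval s := fun t ht =>
      heqB t (List.mem_append_right _ ht)
    obtain ⟨hk₁, hl₁⟩ := sat_sound hsA'
    obtain ⟨hk₂, hl₂⟩ := sat_sound hsX'
    rw [footprint_congr heqAs] at hk₁
    rw [hfpX s'] at hk₂
    have hlook2 : ∀ n ∈ SB \ SA, h₂.lookup n = some (g n) := by
      intro n hn
      have h := hl₂ (Trm.const n, Trm.const (g n))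
        (by rw [hFX, ptos_bigStar_pto]
            exact List.mem_map_of_mem (Finset.mem_toList.mpr hn))
      simpa [Trm.eval] using h
    -- points-to addresses of A are in h₁ and lookups agree
    have hmemA : ∀ p ∈ A.spatial.ptos, p.1.eval s' ∈ h₁ := by
      intro p hp
      rw [← Finmap.mem_keys, hk₁, mem_footprint]
      refine ⟨(p.1, p.1),
        (ptos_sublist_absArrays A.spatial).mem
          (List.mem_map_of_mem (f := fun q : Trm × Trm => (q.1, q.1)) hp), ?_⟩
      rw [heqAs p.1 (ptos_trms hp).1]
      simp
    have hlookA : ∀ p ∈ A.spatial.ptos,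
        (h₁ ∪ h₂).lookup (p.1.eval s') = some (p.2.eval s') := by
      intro p hp
      rw [Finmap.lookup_union_left (hmemA p hp)]
      exact hl₁ p hp
    -- lookup of the full heap at B's points-to addresses
    have hlookB : ∀ p ∈ B.spatial.ptos,
        (h₁ ∪ h₂).lookup (p.1.eval s') = some (p.2.eval s') := by
      intro p hp
      have heqp1 : p.1.eval s' = p.1.eval s := heqBs _ (ptos_trms hp).1
      have heqp2 : p.2.eval s' = p.2.eval s := heqBs _ (ptos_trms hp).2
      by_cases hmem : p.1.eval s ∈ SA
      · rw [hSAdef, mem_footprint] at hmem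
        obtain ⟨q, hq, hicc⟩ := hmem
        rcases absArrays_cases hq with harr | ⟨he2, u, hu⟩
        · rcases hβ1 p hp q harr with hlt | hlt <;>
            (rw [Finset.mem_Icc] at hicc; omega)
        · rw [he2, Finset.Icc_self, Finset.mem_singleton] at hicc
          rcases hβ2 (q.1, u) hu p hp with hne | hval
          · exact absurd hicc.symm hne
          · have hqt : q.1.eval s' = q.1.eval s := heqAs _ (ptos_trms hu).1
            have hut : u.eval s' = u.eval s := heqAs _ (ptos_trms hu).2
            have h : Finmap.lookup (q.1.eval s') (h₁ ∪ h₂) = some (u.eval s') :=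
              hlookA (q.1, u) hu
            have hval' : u.eval s = p.2.eval s := hval
            rw [heqp1, hicc, ← hqt, h, hut, hval', ← heqp2]
      · have hSBm : p.1.eval s ∈ SB := by
          rw [hSBdef, mem_footprint]
          refine ⟨(p.1, p.1),
            (ptos_sublist_absArrays B.spatial).mem
              (List.mem_map_of_mem (f := fun q : Trm × Trm => (q.1, q.1)) hp), by simp⟩
        have hm1 : p.1.eval s' ∉ h₁ := by
          rw [← Finmap.mem_keys, hk₁, heqp1]; exact hmem
        rw [Finmap.lookup_union_right hm1, heqp1,
          hlook2 _ (Finset.mem_sdiff.mpr ⟨hSBm, hmem⟩), hgB p hp, ← heqp2]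
    -- the content function for the B-side decomposition
    set gB : ℕ → ℕ := fun n => ((h₁ ∪ h₂).lookup n).getD 0 with hgBdef
    have hwfB' : ∀ p ∈ B.spatial.absArrays, p.1.eval s' ≤ p.2.eval s' := by
      intro p hp
      rw [heqBs _ (absArrays_trms hp).1, heqBs _ (absArrays_trms hp).2]
      exact hwfB p hp
    have hdB' : B.spatial.absArrays.Pairwise
        (fun p q => p.2.eval s' < q.1.eval s' ∨ q.2.eval s' < p.1.eval s') := by
      refine hdB.imp_of_mem ?_
      intro a b ha hb
      rw [heqBs _ (absArrays_trms ha).1, heqBs _ (absArrays_trms ha).2,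
        heqBs _ (absArrays_trms hb).1, heqBs _ (absArrays_trms hb).2]
      exact id
    have hgB' : ∀ p ∈ B.spatial.ptos, gB (p.1.eval s') = p.2.eval s' := by
      intro p hp
      show ((h₁ ∪ h₂).lookup (p.1.eval s')).getD 0 = p.2.eval s'
      rw [hlookB p hp]
      rfl
    obtain ⟨hB', hsB', hkB', hlB'⟩ := sat_construct B.spatial s' gB hwfB' hdB' hgB'
    rw [footprint_congr heqBs] at hkB' hlB'
    -- construct the Y-heap
    have hwfY : ∀ p ∈ FY.absArrays, p.1.eval s' ≤ p.2.eval s' := by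
      intro p hp
      rw [hFY, absArrays_bigStar_arr] at hp
      obtain ⟨n, _, rfl⟩ := List.mem_map.mp hp
      exact le_refl _
    have hdY : FY.absArrays.Pairwise
        (fun p q => p.2.eval s' < q.1.eval s' ∨ q.2.eval s' < p.1.eval s') := by
      rw [hFY, absArrays_bigStar_arr]
      exact pairwise_singletons s' (Finset.nodup_toList _)
    have hgY : ∀ p ∈ FY.ptos, gB (p.1.eval s') = p.2.eval s' := by
      intro p hp
      rw [hFY, ptos_bigStar_arr] at hp
      simp at hp
    obtain ⟨hY', hsY', hkY', hlY'⟩ := sat_construct FY s' gB hwfY hdY hgY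
    rw [hfpY s'] at hkY' hlY'
    -- keys of the whole heap
    have hkeysU : (h₁ ∪ h₂).keys = SA ∪ SB := by
      rw [Finmap.keys_union, hk₁, hk₂, Finset.union_sdiff_self_eq_union]
    have hmemU : ∀ n, n ∈ h₁ ∪ h₂ ↔ n ∈ SA ∪ SB := fun n => by
      rw [← Finmap.mem_keys, hkeysU]
    have hdisBY : hB'.Disjoint hY' := by
      intro x hx1 hx2
      rw [← Finmap.mem_keys, hkB'] at hx1
      rw [← Finmap.mem_keys, hkY'] at hx2
      exact (Finset.mem_sdiff.mp hx2).2 hx1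
    have hsplit : h₁ ∪ h₂ = hB' ∪ hY' := by
      apply Finmap.ext_lookup
      intro n
      by_cases hnB : n ∈ SB
      · have hmB : n ∈ hB' := by rw [← Finmap.mem_keys, hkB']; exact hnB
        rw [Finmap.lookup_union_left hmB, hlB' n hnB]
        obtain ⟨b, hb⟩ := Finmap.mem_iff.mp
          ((hmemU n).mpr (Finset.mem_union_right _ hnB))
        rw [hb]
        simp [hgBdef, hb]
      · by_cases hnA : n ∈ SA
        · have hmB : n ∉ hB' := by rw [← Finmap.mem_keys, hkB']; exact hnB
          have hnY : n ∈ SA \ SB := Finset.mem_sdiff.mpr ⟨hnA, hnB⟩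
          rw [Finmap.lookup_union_right hmB, hlY' n hnY]
          obtain ⟨b, hb⟩ := Finmap.mem_iff.mp
            ((hmemU n).mpr (Finset.mem_union_left _ hnA))
          rw [hb]
          simp [hgBdef, hb]
        · have h1 : (h₁ ∪ h₂).lookup n = none := by
            rw [Finmap.lookup_eq_none]
            intro hc
            rcases Finset.mem_union.mp ((hmemU n).mp hc) with h | h
            exacts [hnA h, hnB h]
          have h2 : (hB' ∪ hY').lookup n = none := by
            rw [Finmap.lookup_eq_none, Finmap.mem_union]
            rintro (hc | hc)
            · exact hnB (by rwa [← Finmap.mem_keys, hkB'] at hc)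
            · exact hnA (Finset.mem_sdiff.mp
                (by rwa [← Finmap.mem_keys, hkY'] at hc)).1
          rw [h1, h2]
    have hpB' : B.pure.sat s' := by
      rw [pure_sat_congr fun t ht => heqB t (List.mem_append_left _ ht)]
      exact hpB
    exact ⟨⟨hpB', trivial⟩, hB', hY', hdisBY, hsplit, hsB', hsY'⟩
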